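/- arXiv:2401.13922 — 2 statements merged into one kernel-verified Lean document; each statement's English description precedes it below -/
import Mathlib

section
/- Let n ≥ 0, N = 2^n, let g : ℕ → GF(2) with g 0 = 1, let G be the N×N upper-triangular Toeplitz matrix with generator sequence g, let F = [[1,0],[1,1]] and F^{⊗n} its Kronecker power, and let η : Fin N → GF(2) be any row vector. Then for every v : Fin N → GF(2), (((v + e_{N−1}) · G) + η) · F^{⊗n} = ((v · G) + η) · F^{⊗n} + 1, where e_{N−1} is the standard basis row vector with a 1 in the last position and 1 is the all-ones row vector. -/
/-- Arikan's `2 × 2` binary polarization kernel `F = [[1, 0], [1, 1]]` over GF(2). -/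
def polarKernel : Matrix (Fin 2) (Fin 2) (ZMod 2) := !![1, 0; 1, 1]

/-- The polar transform matrix `F^{⊗n}`: the `n`-fold Kronecker power of the polarization
kernel, realized as a `2^n × 2^n` matrix over GF(2). -/
def polarTransform : ∀ n : ℕ, Matrix (Fin (2 ^ n)) (Fin (2 ^ n)) (ZMod 2)
  | 0 => 1
  | n + 1 =>
    Matrix.reindex (finProdFinEquiv.trans (finCongr (by rw [pow_succ, Nat.mul_comm])))
      (finProdFinEquiv.trans (finCongr (by rw [pow_succ, Nat.mul_comm])))
      (Matrix.kroneckerMap (· * ·) polarKernel (polarTransform n))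

lemma polarKernel_last_row (j : Fin 2) : polarKernel 1 j = 1 := by
  fin_cases j <;> simp [polarKernel]

lemma polarTransform_last_row (n : ℕ) (j : Fin (2 ^ n)) :
    polarTransform n ⟨2 ^ n - 1, Nat.sub_lt (Nat.two_pow_pos n) one_pos⟩ j = 1 := by
  induction n with
  | zero =>
      have : j = ⟨0, by norm_num⟩ := by
        ext; omega
      subst this
      simp [polarTransform, Matrix.one_apply]
  | succ n ih =>
      rw [polarTransform]
      rw [Matrix.reindex_apply, Matrix.submatrix_apply]
      have hi : (finProdFinEquiv.trans
            (finCongr (by rw [pow_succ, Nat.mul_comm] : 2 * 2 ^ n = 2 ^ (n + 1)))).symm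
            ⟨2 ^ (n + 1) - 1, Nat.sub_lt (Nat.two_pow_pos (n + 1)) one_pos⟩ =
          ((1 : Fin 2), ⟨2 ^ n - 1, Nat.sub_lt (Nat.two_pow_pos n) one_pos⟩) := by
        apply finProdFinEquiv.injective
        simp only [Equiv.symm_trans_apply, Equiv.apply_symm_apply]
        ext
        simp [finProdFinEquiv, Fin.ext_iff]
        have h := Nat.two_pow_pos n
        omega
      rw [hi]
      rw [Matrix.kroneckerMap_apply]
      rw [polarKernel_last_row, ih, one_mul]

/-- **Repetition-node processing (Eq. (10)).** Flipping the last information-carrier bit before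
the convolutional precoder `G` (upper-triangular Toeplitz, `g 0 = 1`) and the polar transform
`F^{⊗n}` flips every output bit: `(((v + e_{N-1}) · G) + η) · F^{⊗n} = ((v · G) + η) · F^{⊗n} + 1`. -/
theorem repetitionNode_flip_last_bit
    (n : ℕ) (g : ℕ → ZMod 2) (hg : g 0 = 1)
    (G : Matrix (Fin (2 ^ n)) (Fin (2 ^ n)) (ZMod 2))
    (hG : ∀ i j : Fin (2 ^ n), G i j = if (i : ℕ) ≤ (j : ℕ) then g ((j : ℕ) - (i : ℕ)) else 0)
    (η : Fin (2 ^ n) → ZMod 2) (v : Fin (2 ^ n) → ZMod 2) :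
    Matrix.vecMul
        (Matrix.vecMul
            (v + Pi.single (⟨2 ^ n - 1, Nat.sub_lt (Nat.two_pow_pos n) one_pos⟩ : Fin (2 ^ n))
              (1 : ZMod 2)) G + η)
        (polarTransform n) =
      Matrix.vecMul (Matrix.vecMul v G + η) (polarTransform n) + fun _ => 1 := by
  set last : Fin (2 ^ n) := ⟨2 ^ n - 1, Nat.sub_lt (Nat.two_pow_pos n) one_pos⟩ with hlast
  have hrow : G last = Pi.single last (1 : ZMod 2) := by
    funext j
    rw [hG]
    rcases eq_or_ne j last with rfl | hne
    · simp [Nat.sub_self, hg]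
    · have hj : (j : ℕ) < 2 ^ n - 1 := by
        have := j.isLt
        have : (j : ℕ) ≠ 2 ^ n - 1 := fun h => hne (by ext; simp [hlast, h])
        omega
      rw [if_neg (by simp [hlast]; omega), Pi.single_eq_of_ne hne]
  have hsingle : Matrix.vecMul (Pi.single last (1 : ZMod 2)) G
      = Pi.single last (1 : ZMod 2) := by
    rw [Matrix.single_one_vecMul]; exact hrow
  rw [show Matrix.vecMul (v + Pi.single last 1) G
      = Matrix.vecMul v G + Pi.single last (1 : ZMod 2) from by
        rw [Matrix.add_vecMul, hsingle],
    add_right_comm, Matrix.add_vecMul]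
  congr 1
  funext j
  rw [Matrix.single_one_vecMul]
  exact polarTransform_last_row n j
end

section
/- Let n ≥ 0, N = 2^n, let g : ℕ → GF(2), let G be the N×N upper-triangular Toeplitz matrix with generator sequence g, let F = [[1,0],[1,1]] and F^{⊗n} its Kronecker power, and let η : Fin N → GF(2). For any row vector v : Fin N → GF(2) with v_0 = 0, set β = ((v · G) + η) · F^{⊗n}. Then Σ_{j=0}^{N−1} β_j = Σ_{j=0}^{N−1} (η · F^{⊗n})_j; that is, β lies in the coset of the single-parity-check codebook determined by η · F^{⊗n}. -/
lemma polarTransform_rowSum (n : ℕ) (i : Fin (2 ^ n)) :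
    (∑ j, polarTransform n i j) = if (i : ℕ) = 0 then 1 else 0 := by
  induction n with
  | zero =>
    have : (i : ℕ) = 0 := by omega
    simp [polarTransform, this, Matrix.one_apply, Fin.ext_iff]
  | succ n ih =>
    set e : Fin 2 × Fin (2 ^ n) ≃ Fin (2 ^ (n + 1)) :=
      finProdFinEquiv.trans (finCongr (by rw [pow_succ, Nat.mul_comm]))
    have hsum : (∑ j, polarTransform (n + 1) i j)
        = ∑ p : Fin 2 × Fin (2 ^ n),
            polarKernel (e.symm i).1 p.1 * polarTransform n (e.symm i).2 p.2 := by
      rw [← e.sum_comp (fun j => polarTransform (n + 1) i j)]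
      simp [polarTransform, Matrix.reindex_apply, Matrix.kroneckerMap, e]
    rw [hsum, Fintype.sum_prod_type]
    have hK : ∀ a : Fin 2, (∑ b, polarKernel a b) = if (a : ℕ) = 0 then 1 else 0 := by
      decide
    simp_rw [← Finset.mul_sum, ih, ← Finset.sum_mul, hK]
    have key : ((i : ℕ) = 0) ↔ ((((e.symm i).1 : ℕ) = 0) ∧ (((e.symm i).2 : ℕ) = 0)) := by
      constructor
      · intro h
        have : i = e ⟨0, 0⟩ := by
          apply Fin.ext
          simp [e, finProdFinEquiv, h]
        rw [this, Equiv.symm_apply_apply]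
        exact ⟨rfl, rfl⟩
      · intro ⟨h1, h2⟩
        have : e.symm i = (⟨0, by norm_num⟩, ⟨0, Nat.two_pow_pos n⟩) := by
          ext <;> simp [Fin.ext_iff, h1, h2]
        have := congrArg e this
        rw [Equiv.apply_symm_apply] at this
        rw [this]
        simp [e, finProdFinEquiv]
    by_cases h1 : ((e.symm i).1 : ℕ) = 0 <;> by_cases h2 : ((e.symm i).2 : ℕ) = 0 <;>
      simp [h1, h2, key]

lemma vecMul_polarTransform_sum (n : ℕ) (w : Fin (2 ^ n) → ZMod 2) :
    (∑ j, Matrix.vecMul w (polarTransform n) j) = w ⟨0, Nat.two_pow_pos n⟩ := by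
  simp_rw [Matrix.vecMul, dotProduct]
  rw [Finset.sum_comm]
  simp_rw [← Finset.mul_sum, polarTransform_rowSum]
  rw [Finset.sum_eq_single (⟨0, Nat.two_pow_pos n⟩ : Fin (2 ^ n))]
  · simp
  · intro b _ hb
    have : (b : ℕ) ≠ 0 := fun h => hb (Fin.ext h)
    simp [this]
  · simp

/-- **SPC-node structure.** If the first information-carrier bit is frozen (`v 0 = 0`), then the
node output `β = ((v · G) + η) · F^{⊗n}` lies in the coset of the single-parity-check codebook
determined by `η · F^{⊗n}`: the parities of `β` and of `η · F^{⊗n}` coincide. -/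
theorem spcNode_parity
    (n : ℕ) (g : ℕ → ZMod 2)
    (G : Matrix (Fin (2 ^ n)) (Fin (2 ^ n)) (ZMod 2))
    (hG : ∀ i j : Fin (2 ^ n), G i j = if (i : ℕ) ≤ (j : ℕ) then g ((j : ℕ) - (i : ℕ)) else 0)
    (η : Fin (2 ^ n) → ZMod 2) (v : Fin (2 ^ n) → ZMod 2)
    (hv0 : v ⟨0, Nat.two_pow_pos n⟩ = 0) :
    (∑ j, Matrix.vecMul (Matrix.vecMul v G + η) (polarTransform n) j) =
      ∑ j, Matrix.vecMul η (polarTransform n) j := by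
  rw [vecMul_polarTransform_sum, vecMul_polarTransform_sum]
  have hvG : Matrix.vecMul v G ⟨0, Nat.two_pow_pos n⟩ = 0 := by
    rw [Matrix.vecMul, dotProduct]
    apply Finset.sum_eq_zero
    intro i _
    rcases Nat.eq_zero_or_pos (i : ℕ) with h | h
    · have : i = ⟨0, Nat.two_pow_pos n⟩ := Fin.ext h
      rw [this, hv0, zero_mul]
    · rw [hG]
      simp [Nat.not_le.mpr h]
  rw [Pi.add_apply, hvG, zero_add]
end
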